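/- Composition in OPRA_m is weak, not strong: for every m ≥ 1 there exist o-points A, C with A ∠_{4m-1}^{4m-1} C such that no o-point B exists with A ∠_0^0 B and B ∠_1^{2m} C, although the triple (∠_0^0, ∠_1^{2m}, ∠_{4m-1}^{4m-1}) is realizable by some other choice of A, B, C. -/

import Mathlib

open Real Complex

/-- The OPRA_m sector `[i]_m` as a subset of the circle `ℝ/2πℤ` (`Real.Angle`):
an open arc if `i` is odd, a single point if `i` is even. -/
noncomputable def sector (m : ℕ) (i : ZMod (4*m)) : Set Real.Angle :=
  if Odd i.val then
    (fun r : ℝ => (r : Real.Angle)) ''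
      Set.Ioo (2*π*((i.val : ℝ)-1)/(4*m)) (2*π*((i.val : ℝ)+1)/(4*m))
  else {((2*π*(i.val : ℝ)/(4*m) : ℝ) : Real.Angle)}

/-- The direction angle `φ_XY` of the vector `Y - X`, as an element of the circle. -/
noncomputable def phiAngle (X Y : ℂ) : Real.Angle := (Complex.arg (Y - X) : Real.Angle)

/-- An o-point: a point of the plane (modeled as `ℂ`) with an orientation. -/
abbrev OPoint := ℂ × Real.Angle

/-- The distinct-position OPRA_m base relation `A ∠_i^j B`. -/
noncomputable def oprarel (m : ℕ) (i j : ZMod (4*m)) (A B : OPoint) : Prop :=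
  A.1 ≠ B.1 ∧ phiAngle A.1 B.1 - A.2 ∈ sector m i ∧ phiAngle B.1 A.1 - B.2 ∈ sector m j

/-- The same-position OPRA_m base relation `A ∠i B`. -/
noncomputable def oprasame (m : ℕ) (i : ZMod (4*m)) (A B : OPoint) : Prop :=
  A.1 = B.1 ∧ B.2 - A.2 ∈ sector m i

/-- `turn_m(i,j,k)`. -/
def turnRel (m : ℕ) (i j k : ZMod (4*m)) : Prop :=
  if Odd i.val ∧ Odd j.val then i + j + k = 0 ∨ i + j + k = 1 ∨ i + j + k = -1
  else i + j + k = 0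

/-- `sign_m(i)`. -/
def signm (m : ℕ) (i : ZMod (4*m)) : ℤ :=
  if i.val = 0 ∨ i.val = 2*m then 0 else if i.val < 2*m then 1 else -1

/-- `triangle_m(i,j,k)`. -/
def triRel (m : ℕ) (i j k : ZMod (4*m)) : Prop :=
  turnRel m i j (k - ((2*m : ℕ) : ZMod (4*m))) ∧
  ¬(i = ((2*m : ℕ) : ZMod (4*m)) ∧ j = ((2*m : ℕ) : ZMod (4*m)) ∧ k = ((2*m : ℕ) : ZMod (4*m))) ∧
  signm m i = signm m j ∧ signm m j = signm m k

/-- The sign of an angle, where both `0` and `π` get sign `0`. -/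
noncomputable def angsign (θ : Real.Angle) : ℤ := by
  classical exact if θ.toReal = 0 ∨ θ.toReal = π then 0 else if 0 < θ.toReal then 1 else -1

lemma argAngle_polar (r θ : ℝ) (hr : 0 < r) :
    (Complex.arg ((r : ℂ) * (Real.cos θ + Real.sin θ * Complex.I)) : Real.Angle)
      = (θ : Real.Angle) := by
  have h := Complex.arg_mul_cos_add_sin_mul_I_coe_angle hr (θ : Real.Angle)
  rwa [Real.Angle.cos_coe, Real.Angle.sin_coe] at h

lemma coe_eq_coe_of_sub (x y : ℝ) (k : ℤ) (h : x - y = 2*π*k) :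
    (x : Real.Angle) = (y : Real.Angle) :=
  Real.Angle.angle_eq_iff_two_pi_dvd_sub.2 ⟨k, h⟩

lemma mem_sector_odd {m : ℕ} {i : ZMod (4*m)} (hodd : Odd i.val) (x : ℝ)
    (h1 : 2*π*((i.val : ℝ)-1)/(4*m) < x) (h2 : x < 2*π*((i.val : ℝ)+1)/(4*m)) :
    (x : Real.Angle) ∈ sector m i := by
  rw [sector, if_pos hodd]; exact ⟨x, ⟨h1, h2⟩, rfl⟩


lemma val_one_zmod (m : ℕ) (hm : 1 ≤ m) : (1 : ZMod (4*m)).val = 1 := by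
  haveI : NeZero (4*m) := ⟨by omega⟩
  rw [show (1 : ZMod (4*m)) = ((1:ℕ) : ZMod (4*m)) by push_cast; ring]
  exact ZMod.val_natCast_of_lt (by omega)

lemma mem_sector_one (m : ℕ) (hm : 1 ≤ m) (x : ℝ) (hx0 : 0 < x) (hx4 : x < π/(m:ℝ)) :
    (x : Real.Angle) ∈ sector m 1 := by
  have h4m : (0:ℝ) < 4*(m:ℝ) := by
    have : (1:ℝ) ≤ m := by exact_mod_cast hm
    linarith
  have hv1 := val_one_zmod m hm
  apply mem_sector_odd (by rw [hv1]; exact odd_one) x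
  · rw [hv1]
    push_cast
    rw [show 2*π*((1:ℝ)-1)/(4*(m:ℝ)) = 0 by ring]
    exact hx0
  · rw [hv1]
    push_cast
    rw [show 2*π*((1:ℝ)+1)/(4*(m:ℝ)) = π/(m:ℝ) by field_simp; ring]
    exact hx4

lemma mem_sector_top (m : ℕ) (hm : 1 ≤ m) (x : ℝ) (hx0 : 0 < x) (hx4 : x < π/(m:ℝ)) :
    ((-x : ℝ) : Real.Angle) ∈ sector m (((4*m-1:ℕ)) : ZMod (4*m)) := by
  haveI : NeZero (4*m) := ⟨by omega⟩
  have hmR : (1:ℝ) ≤ m := by exact_mod_cast hm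
  have h4m : (0:ℝ) < 4*(m:ℝ) := by linarith
  have hm0 : (0:ℝ) < m := by linarith
  have hv : (((4*m-1:ℕ)) : ZMod (4*m)).val = 4*m-1 := ZMod.val_natCast_of_lt (by omega)
  rw [show ((-x:ℝ) : Real.Angle) = ((2*π - x : ℝ) : Real.Angle) from
    (coe_eq_coe_of_sub _ _ 1 (by push_cast; ring)).symm]
  apply mem_sector_odd (by rw [hv]; exact ⟨2*m-1, by omega⟩) (2*π - x)
  · rw [hv]
    push_cast [Nat.cast_sub (by omega : 1 ≤ 4*m)]
    rw [show 2*π*(4*(m:ℝ)-1-1)/(4*(m:ℝ)) = 2*π - π/(m:ℝ) by field_simp; ring]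
    linarith
  · rw [hv]
    push_cast [Nat.cast_sub (by omega : 1 ≤ 4*m)]
    rw [show 2*π*(4*(m:ℝ)-1+1)/(4*(m:ℝ)) = 2*π by field_simp; ring]
    linarith

lemma not_mem_sector_one (m : ℕ) (hm : 1 ≤ m) (x : ℝ) (hx0 : 0 < x) (hxπ : x ≤ π) :
    ((-x : ℝ) : Real.Angle) ∉ sector m 1 := by
  have hmR : (1:ℝ) ≤ m := by exact_mod_cast hm
  have h4m : (0:ℝ) < 4*(m:ℝ) := by linarith
  have hm0 : (0:ℝ) < m := by linarith
  have hv1 := val_one_zmod m hm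
  rw [sector, if_pos (by rw [hv1]; exact odd_one), hv1]
  rintro ⟨y, ⟨hy1, hy2⟩, hyeq⟩
  obtain ⟨k, hk⟩ := Real.Angle.angle_eq_iff_two_pi_dvd_sub.1 (hyeq : (y : Real.Angle) = _)
  push_cast at hy1 hy2
  rw [show 2*π*((1:ℝ)-1)/(4*(m:ℝ)) = 0 by ring] at hy1
  rw [show 2*π*((1:ℝ)+1)/(4*(m:ℝ)) = π/(m:ℝ) by field_simp; ring] at hy2
  have hy2' : y < π := lt_of_lt_of_le hy2 (by
    rw [div_le_iff₀ hm0]; nlinarith [pi_pos])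
  -- hk : y - -x = 2*π*k
  rcases le_or_gt k 0 with hk0 | hk0
  · have hkR : (k:ℝ) ≤ 0 := by exact_mod_cast hk0
    nlinarith [pi_pos]
  · have hkR : (1:ℝ) ≤ (k:ℝ) := by exact_mod_cast hk0
    nlinarith [pi_pos]

/-- composition in OPRA_m is weak, not strong. -/
theorem stmt18 (m : ℕ) (hm : 1 ≤ m) :
    (∃ A C : OPoint,
      oprarel m (((4*m - 1 : ℕ) : ZMod (4*m))) (((4*m - 1 : ℕ) : ZMod (4*m))) A C ∧
      ¬ ∃ B : OPoint, oprarel m 0 0 A B ∧ oprarel m 1 (((2*m : ℕ) : ZMod (4*m))) B C) ∧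
    (∃ A B C : OPoint,
      oprarel m 0 0 A B ∧ oprarel m 1 (((2*m : ℕ) : ZMod (4*m))) B C ∧
      oprarel m (((4*m - 1 : ℕ) : ZMod (4*m))) (((4*m - 1 : ℕ) : ZMod (4*m))) A C) := by
  haveI : NeZero (4*m) := ⟨by omega⟩
  have hmR : (1:ℝ) ≤ m := by exact_mod_cast hm
  have h4m : (0:ℝ) < 4*(m:ℝ) := by linarith
  set a : ℝ := π/(4*(m:ℝ)) with ha
  have hapos : 0 < a := by positivity
  have haa : a * (4*(m:ℝ)) = π := div_mul_cancel₀ π (ne_of_gt h4m)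
  have ha4 : a ≤ π/4 := by
    rw [ha, div_le_div_iff₀ h4m (by norm_num)]
    nlinarith [pi_pos]
  have h4aπ : 4*a ≤ π := by nlinarith [pi_pos]
  have hcos : 0 < Real.cos a :=
    Real.cos_pos_of_mem_Ioo ⟨by linarith [pi_pos], by linarith [pi_pos]⟩
  have hsin : 0 < Real.sin a := Real.sin_pos_of_pos_of_lt_pi hapos (by linarith [pi_pos])
  set r : ℝ := 1/(2*Real.cos a) with hrdef
  have hr : 0 < r := by positivity
  have hrc : r * Real.cos a = 1/2 := by
    rw [hrdef]; field_simp
  have hrcC : (r:ℂ) * (Real.cos a : ℂ) = 1/2 := by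
    rw [← Complex.ofReal_mul, hrc]; norm_num
  set C1 : ℂ := (r:ℂ) * (Real.cos (-a) + Real.sin (-a) * Complex.I) with hC1
  -- complex identities
  have idBC : C1 - 1 = (r:ℂ) * (Real.cos (π+a) + Real.sin (π+a) * Complex.I) := by
    rw [hC1, Real.cos_neg, Real.sin_neg, Real.cos_add, Real.sin_add, Real.cos_pi, Real.sin_pi]
    simp only [Complex.ofReal_neg, Complex.ofReal_mul, Complex.ofReal_sub, Complex.ofReal_add,
      Complex.ofReal_one, Complex.ofReal_zero]
    linear_combination (2:ℂ) * hrcC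
  have idCB : (1:ℂ) - C1 = (r:ℂ) * (Real.cos a + Real.sin a * Complex.I) := by
    rw [hC1, Real.cos_neg, Real.sin_neg]
    simp only [Complex.ofReal_neg]
    linear_combination (-2:ℂ) * hrcC
  have idCA : (0:ℂ) - C1 = (r:ℂ) * (Real.cos (π-a) + Real.sin (π-a) * Complex.I) := by
    rw [hC1, Real.cos_neg, Real.sin_neg, Real.cos_pi_sub, Real.sin_pi_sub]
    simp only [Complex.ofReal_neg]
    ring
  have him : C1.im = -(r * Real.sin a) := by
    rw [hC1]
    simp only [Complex.mul_im, Complex.add_im, Complex.add_re, Complex.ofReal_re,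
      Complex.ofReal_im, Complex.mul_re, Complex.I_re, Complex.I_im, Real.sin_neg,
      Real.cos_neg]
    ring
  have hrs : 0 < r * Real.sin a := by positivity
  have hC1ne1 : C1 ≠ 1 := by
    intro h; have h0 := him; rw [h, Complex.one_im] at h0; linarith
  have hC1ne0 : C1 ≠ 0 := by
    intro h; have h0 := him; rw [h, Complex.zero_im] at h0; linarith
  -- arg computations
  have hargAB : phiAngle 0 1 = ((0:ℝ) : Real.Angle) := by
    simp [phiAngle]
  have hargBA : phiAngle 1 0 = ((π:ℝ) : Real.Angle) := by
    simp [phiAngle, Complex.arg_neg_one]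
  have hargAC : phiAngle 0 C1 = ((-a : ℝ) : Real.Angle) := by
    rw [phiAngle, sub_zero, hC1]; exact argAngle_polar r (-a) hr
  have hargBC : phiAngle 1 C1 = ((π + a : ℝ) : Real.Angle) := by
    rw [phiAngle, idBC]; exact argAngle_polar r (π+a) hr
  have hargCB : phiAngle C1 1 = ((a : ℝ) : Real.Angle) := by
    rw [phiAngle, idCB]; exact argAngle_polar r a hr
  have hargCA : phiAngle C1 0 = ((π - a : ℝ) : Real.Angle) := by
    rw [phiAngle, idCA]; exact argAngle_polar r (π-a) hr
  -- val computations
  have hv0 : (0 : ZMod (4*m)).val = 0 := ZMod.val_zero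
  have hv1 : (1 : ZMod (4*m)).val = 1 := by
    rw [show (1 : ZMod (4*m)) = ((1:ℕ) : ZMod (4*m)) by push_cast; ring]
    exact ZMod.val_natCast_of_lt (by omega)
  have hv2m : (((2*m:ℕ)) : ZMod (4*m)).val = 2*m := ZMod.val_natCast_of_lt (by omega)
  have hv4m1 : (((4*m-1:ℕ)) : ZMod (4*m)).val = 4*m-1 := ZMod.val_natCast_of_lt (by omega)
  -- even sectors
  have hs0 : sector m 0 = {(0 : Real.Angle)} := by
    rw [sector, hv0, if_neg (by simp)]
    norm_num
  have hs2m : sector m ((2*m:ℕ) : ZMod (4*m)) = {((π:ℝ) : Real.Angle)} := by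
    rw [sector, hv2m, if_neg (by simp [Nat.odd_iff, Nat.mul_mod_right])]
    congr 2
    push_cast
    rw [div_eq_iff (ne_of_gt h4m)]
    ring
  -- odd sector memberships
  have hodd1 : Odd (1 : ZMod (4*m)).val := by rw [hv1]; exact odd_one
  have hodd4 : Odd (((4*m-1:ℕ)) : ZMod (4*m)).val := by
    rw [hv4m1]; exact ⟨2*m-1, by omega⟩
  have hpim : π/(m:ℝ) = 4*a := by
    rw [ha]; field_simp
  have mem1 : ∀ x : ℝ, 0 < x → x < 4*a → (x : Real.Angle) ∈ sector m 1 := fun x hx0 hx4 =>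
    mem_sector_one m hm x hx0 (by rw [hpim]; exact hx4)
  have mem4 : ∀ x : ℝ, 0 < x → x < 4*a →
      ((-x : ℝ) : Real.Angle) ∈ sector m (((4*m-1:ℕ)) : ZMod (4*m)) := fun x hx0 hx4 =>
    mem_sector_top m hm x hx0 (by rw [hpim]; exact hx4)
  -- the o-points
  refine ⟨⟨((0:ℂ), (0 : Real.Angle)), (C1, ((π - a/2 : ℝ) : Real.Angle)), ⟨(hC1ne0.symm : (0:ℂ) ≠ C1), ?_, ?_⟩, ?_⟩,
    ((0:ℂ), (0 : Real.Angle)), ((1:ℂ), ((π:ℝ) : Real.Angle)),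
    (C1, ((π + a : ℝ) : Real.Angle)), ⟨(zero_ne_one : (0:ℂ) ≠ 1), ?_, ?_⟩,
    ⟨(hC1ne1.symm : (1:ℂ) ≠ C1), ?_, ?_⟩, ⟨(hC1ne0.symm : (0:ℂ) ≠ C1), ?_, ?_⟩⟩
  -- Part 1, relation A ∠ C'
  · show phiAngle 0 C1 - (0 : Real.Angle) ∈ _
    rw [hargAC, sub_zero]
    exact mem4 a hapos (by linarith)
  · show phiAngle C1 0 - ((π - a/2 : ℝ) : Real.Angle) ∈ _
    rw [hargCA, ← Real.Angle.coe_sub, show π - a - (π - a/2) = -(a/2) by ring]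
    exact mem4 (a/2) (by linarith) (by linarith)
  -- Part 1, nonexistence of B
  · rintro ⟨B0, ⟨hAB, h1, h2⟩, ⟨hBC, h3, h4⟩⟩
    have hB0ne : B0.1 ≠ 0 := fun h => hAB h.symm
    rw [hs0, Set.mem_singleton_iff, sub_zero] at h1
    rw [hs0, Set.mem_singleton_iff, sub_eq_zero] at h2
    have hargB : (Complex.arg B0.1 : Real.Angle) = 0 := by
      rw [phiAngle, sub_zero] at h1; exact h1
    have hB2 : B0.2 = ((π:ℝ) : Real.Angle) := by
      rw [← h2, phiAngle, zero_sub, Complex.arg_neg_coe_angle hB0ne, hargB, zero_add]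
    rw [hs2m, Set.mem_singleton_iff, sub_eq_iff_eq_add] at h4
    have hCBne : C1 - B0.1 ≠ 0 := sub_ne_zero.2 hBC.symm
    have hargCB1 : (Complex.arg (C1 - B0.1) : Real.Angle) = ((π - a/2 : ℝ) : Real.Angle) := by
      have : phiAngle C1 B0.1 = (Complex.arg (C1 - B0.1) : Real.Angle) + ((π:ℝ) : Real.Angle) := by
        rw [phiAngle, show B0.1 - C1 = -(C1 - B0.1) by ring, Complex.arg_neg_coe_angle hCBne]
      rw [this] at h4
      have := h4
      rw [add_comm ((π:ℝ) : Real.Angle)] at this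
      exact add_right_cancel this
    rw [phiAngle, hargCB1, hB2, ← Real.Angle.coe_sub,
      show π - a/2 - π = -(a/2) by ring] at h3
    exact not_mem_sector_one m hm (a/2) (by linarith) (by linarith) h3
  -- Part 2, A ∠_0^0 B
  · show phiAngle 0 1 - (0 : Real.Angle) ∈ _
    rw [hs0, hargAB, sub_zero]; rfl
  · show phiAngle 1 0 - ((π:ℝ) : Real.Angle) ∈ _
    rw [hs0, hargBA, sub_self]; rfl
  -- Part 2, B ∠_1^{2m} C
  · show phiAngle 1 C1 - ((π:ℝ) : Real.Angle) ∈ _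
    rw [hargBC, ← Real.Angle.coe_sub, show π + a - π = a by ring]
    exact mem1 a hapos (by linarith)
  · show phiAngle C1 1 - ((π + a : ℝ) : Real.Angle) ∈ _
    rw [hs2m, hargCB, ← Real.Angle.coe_sub, show a - (π + a) = -π by ring,
      Real.Angle.coe_neg, Real.Angle.neg_coe_pi]
    rfl
  -- Part 2, A ∠ C
  · show phiAngle 0 C1 - (0 : Real.Angle) ∈ _
    rw [hargAC, sub_zero]
    exact mem4 a hapos (by linarith)
  · show phiAngle C1 0 - ((π + a : ℝ) : Real.Angle) ∈ _
    rw [hargCA, ← Real.Angle.coe_sub, show π - a - (π + a) = -(2*a) by ring]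
    exact mem4 (2*a) (by linarith) (by linarith)
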